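/- Let H ⊆ E be a set of arcs such that every oriented cycle γ of G supported on H has zero cost, ∑_e γ_e ℓ_e = 0. Let σ ∈ ℝ^E be a positive flow (Bσ = b, σ ≥ 0) with supp σ ⊆ H. Then there exists a potential p ∈ ℝ^V(H) (on the vertices incident to H) with (p_i − p_j)/ℓ_{ij} = 1 for every arc ij ∈ H, and every such p satisfies Kirchhoff's equation L(σ)p = b on V(H). -/

import Mathlib

open scoped BigOperators

section PhysarumSetup

variable {V E : Type*} [Fintype V] [Fintype E] [DecidableEq V] [DecidableEq E]

/-- Incidence (boundary) matrix of the digraph given by `tail`/`head`: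
`+1` if `i` is the tail of `e`, `-1` if `i` is the head of `e`, `0` otherwise. -/
def incMatrix (tail head : E → V) : Matrix V E ℝ :=
  Matrix.of fun i e => if tail e = i then (1 : ℝ) else if head e = i then -1 else 0

/-- The digraph has no loops. -/
def NoLoops (tail head : E → V) : Prop := ∀ e, tail e ≠ head e

/-- The digraph has no multiple arcs. -/
def NoMultiple (tail head : E → V) : Prop :=
  ∀ e f, tail e = tail f → head e = head f → e = f

/-- Adjacency in the underlying undirected graph. -/
def Adj (tail head : E → V) (i j : V) : Prop :=
  ∃ e, (tail e = i ∧ head e = j) ∨ (tail e = j ∧ head e = i)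

/-- The underlying undirected graph is connected. -/
def IsConnectedGraph (tail head : E → V) : Prop :=
  ∀ i j : V, Relation.ReflTransGen (Adj tail head) i j

/-- `φ` is a flow with source vector `b`: `Bφ = b`. -/
def IsFlow (tail head : E → V) (b : V → ℝ) (φ : E → ℝ) : Prop :=
  (incMatrix tail head).mulVec φ = b

/-- Net supply `b(S)` of a vertex set `S`. -/
def netSupply (b : V → ℝ) (S : Finset V) : ℝ := ∑ i ∈ S, b i

/-- `b*_max = max_{S ⊆ V} |b(S)|`. -/
noncomputable def bstarMax (b : V → ℝ) : ℝ :=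
  sSup {x | ∃ S : Finset V, x = |netSupply b S|}

/-- `b*_min = min { |b(S)| : S ⊆ V, b(S) ≠ 0 }`. -/
noncomputable def bstarMin (b : V → ℝ) : ℝ :=
  sInf {x | ∃ S : Finset V, netSupply b S ≠ 0 ∧ x = |netSupply b S|}

/-- The support of an arc vector. -/
def suppE (φ : E → ℝ) : Set E := {e | φ e ≠ 0}

/-- An arc set is a forest in the underlying undirected graph:
equivalently, it supports no nonzero circulation. -/
def ForestSupport (tail head : E → V) (s : Set E) : Prop :=
  ∀ γ : E → ℝ, (incMatrix tail head).mulVec γ = 0 → (∀ e, γ e ≠ 0 → e ∈ s) → γ = 0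

/-- A basic feasible solution: a positive flow whose support is a forest
in the underlying undirected graph. -/
def IsBFS (tail head : E → V) (b : V → ℝ) (f : E → ℝ) : Prop :=
  IsFlow tail head b f ∧ (∀ e, 0 ≤ f e) ∧ ForestSupport tail head (suppE f)

/-- A vector is circulation free if its support contains no directed cycle:
equivalently, it supports no nonzero nonnegative circulation. -/
def CirculationFree (tail head : E → V) (φ : E → ℝ) : Prop :=
  ∀ γ : E → ℝ, (incMatrix tail head).mulVec γ = 0 → (∀ e, 0 ≤ γ e) →
    (∀ e, γ e ≠ 0 → φ e ≠ 0) → γ = 0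

/-- The weighted graph Laplacian `L(σ) = B · diag(σ/ℓ) · Bᵀ`. -/
noncomputable def lap (tail head : E → V) (ℓ σ : E → ℝ) : Matrix V V ℝ :=
  incMatrix tail head * Matrix.diagonal (fun e => σ e / ℓ e) * (incMatrix tail head).transpose

/-- The field (slope) of a potential: `Ψ(p)_{ij} = (p_i - p_j)/ℓ_{ij}`. -/
noncomputable def field (tail head : E → V) (ℓ : E → ℝ) (p : V → ℝ) : E → ℝ :=
  fun e => (p (tail e) - p (head e)) / ℓ e

/-- The set of vertices incident to an arc set `H`. -/
def VSet (tail head : E → V) (H : Set E) : Set V :=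
  {i | ∃ e ∈ H, tail e = i ∨ head e = i}

/-- Undirected reachability using only arcs in `H`. -/
def UReach (tail head : E → V) (H : Set E) : V → V → Prop :=
  Relation.ReflTransGen
    (fun i j => ∃ e ∈ H, (tail e = i ∧ head e = j) ∨ (tail e = j ∧ head e = i))

/-- `WalkLen tail head ℓ H i j L`: there is a walk in the underlying undirected
graph of `H` from `i` to `j` of total `ℓ`-length `L`. -/
inductive WalkLen (tail head : E → V) (ℓ : E → ℝ) (H : Set E) : V → V → ℝ → Prop
  | refl (i : V) : WalkLen tail head ℓ H i i 0
  | step {j k : V} {L : ℝ} (i : V) (e : E) (he : e ∈ H)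
      (hik : (tail e = i ∧ head e = j) ∨ (tail e = j ∧ head e = i))
      (hw : WalkLen tail head ℓ H j k L) : WalkLen tail head ℓ H i k (ℓ e + L)

/-- The minimal `ℓ`-length of a connecting walk within `H`. -/
noncomputable def wdist (tail head : E → V) (ℓ : E → ℝ) (H : Set E) (i j : V) : ℝ :=
  sInf {L | WalkLen tail head ℓ H i j L}

/-- The `ℓ`-diameter of `H`: the maximum of `wdist` over pairs of vertices lying in
a common component of `H`. -/
noncomputable def wdiam (tail head : E → V) (ℓ : E → ℝ) (H : Set E) : ℝ :=
  sSup {x | ∃ i j : V, (∃ L, WalkLen tail head ℓ H i j L) ∧ x = wdist tail head ℓ H i j}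

/-- Maximum norm of `p` restricted to a vertex set `A`. -/
noncomputable def supNormOn (A : Set V) (p : V → ℝ) : ℝ := sSup {x | ∃ i ∈ A, x = |p i|}

/-- Maximum norm of an arc vector. -/
noncomputable def eSupNorm (x : E → ℝ) : ℝ := sSup {r | ∃ e : E, r = |x e|}

/-- `min { σ_e : σ_e > 0 }`. -/
noncomputable def minPos (σ : E → ℝ) : ℝ := sInf {x | ∃ e, 0 < σ e ∧ x = σ e}

/-- `min_e ℓ_e`. -/
noncomputable def minLen (ℓ : E → ℝ) : ℝ := sInf {x | ∃ e : E, x = ℓ e}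

/-- The cost `ℓᵀφ` of a flow. -/
def cost (ℓ φ : E → ℝ) : ℝ := ∑ e, ℓ e * φ e

/-- The transshipment problem is feasible: there is a positive flow. -/
def Feasible (tail head : E → V) (b : V → ℝ) : Prop :=
  ∃ φ : E → ℝ, IsFlow tail head b φ ∧ ∀ e, 0 ≤ φ e

/-- `φ` is a minimum-cost positive flow. -/
def IsOptimal (tail head : E → V) (ℓ : E → ℝ) (b : V → ℝ) (φ : E → ℝ) : Prop :=
  IsFlow tail head b φ ∧ (∀ e, 0 ≤ φ e) ∧
    ∀ ψ : E → ℝ, IsFlow tail head b ψ → (∀ e, 0 ≤ ψ e) → cost ℓ φ ≤ cost ℓ ψ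

/-- `Ĥ`: the set of arcs carried by some minimum-cost positive flow. -/
def optSupport (tail head : E → V) (ℓ : E → ℝ) (b : V → ℝ) : Set E :=
  {e | ∃ φ : E → ℝ, IsOptimal tail head ℓ b φ ∧ 0 < φ e}

/-- The current `φ(t) = σ(t)·Ψ(p(t))` of the Physarum solver. -/
noncomputable def current (tail head : E → V) (ℓ : E → ℝ) (σ : ℝ → E → ℝ)
    (p : ℝ → V → ℝ) (t : ℝ) : E → ℝ :=
  fun e => σ t e * field tail head ℓ (p t) e

/-- The Physarum dynamics: `σ(t) > 0` and continuously differentiable on `[0,∞)`,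
`L(σ(t)) p(t) = b`, and `σ' = φ - σ` where `φ(t) = σ(t)·Ψ(p(t))`. -/
structure PhysarumDynamics (tail head : E → V) (ℓ : E → ℝ) (b : V → ℝ)
    (σ : ℝ → E → ℝ) (p : ℝ → V → ℝ) : Prop where
  pos : ∀ t : ℝ, 0 ≤ t → ∀ e, 0 < σ t e
  kirchhoff : ∀ t : ℝ, 0 ≤ t → (lap tail head ℓ (σ t)).mulVec (p t) = b
  contp : ContinuousOn (fun t => p t) (Set.Ici (0 : ℝ))
  dyn : ∀ t ∈ Set.Ici (0 : ℝ), ∀ e : E,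
    HasDerivWithinAt (fun s => σ s e)
      (current tail head ℓ σ p t e - σ t e) (Set.Ici (0 : ℝ)) t

/-- A directed walk from `i` to `j` using the listed arcs in order. -/
inductive DiWalk (tail head : E → V) : V → V → List E → Prop
  | nil (i : V) : DiWalk tail head i i []
  | cons {j k : V} {es : List E} (i : V) (e : E) (h1 : tail e = i) (h2 : head e = j)
      (hw : DiWalk tail head j k es) : DiWalk tail head i k (e :: es)

/-- Discrete `∞`-harmonicity of `p` at node `i` with respect to the arc set `H`:
the maximal in-slope equals the maximal out-slope, and both are nonnegative. -/
noncomputable def InfHarmAt (tail head : E → V) (ℓ : E → ℝ) (H : Set E)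
    (p : V → ℝ) (i : V) : Prop :=
  sSup {r | ∃ e ∈ H, head e = i ∧ r = (p (tail e) - p i) / ℓ e}
    = sSup {r | ∃ e ∈ H, tail e = i ∧ r = (p i - p (head e)) / ℓ e}
  ∧ 0 ≤ sSup {r | ∃ e ∈ H, tail e = i ∧ r = (p i - p (head e)) / ℓ e}

end PhysarumSetup

section AuxProofs

variable {V E : Type*} [Fintype V] [Fintype E] [DecidableEq V] [DecidableEq E]

/-- Undirected walks in `H` recorded as the list of visited vertices. -/
inductive UW (tail head : E → V) (H : Set E) : V → V → List V → Prop
  | nil (v : V) : UW tail head H v v [v]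
  | cons {w v : V} {vs : List V} (u : V) (e : E) (he : e ∈ H)
      (hd : (tail e = u ∧ head e = w) ∨ (tail e = w ∧ head e = u))
      (hw : UW tail head H w v vs) : UW tail head H u v (u :: vs)

variable {tail head : E → V}

lemma UW.head_eq {H : Set E} {u v : V} {vs : List V} (h : UW tail head H u v vs) :
    ∃ t, vs = u :: t := by
  cases h
  · exact ⟨[], rfl⟩
  · exact ⟨_, rfl⟩

lemma UW.suffix {H : Set E} {u v x : V} {l vs : List V} (h : UW tail head H u v vs)
    (hs : (x :: l) <:+ vs) : UW tail head H x v (x :: l) := by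
  induction h with
  | nil w =>
    rcases List.suffix_cons_iff.mp hs with h1 | h1
    · obtain ⟨h3, h4⟩ := List.cons.inj h1
      subst h3; subst h4
      exact UW.nil _
    · exact absurd (List.suffix_nil.mp h1) (by simp)
  | cons u e he hd hw ih =>
    rcases List.suffix_cons_iff.mp hs with h1 | h1
    · obtain ⟨h3, h4⟩ := List.cons.inj h1
      subst h3; subst h4
      exact UW.cons _ e he hd hw
    · exact ih h1

lemma UW.graft {H : Set E} {v x : V} {rest l3 : List V}
    (h2 : UW tail head H x v (x :: l3)) :
    ∀ (l1 : List V) (u : V), UW tail head H u v (l1 ++ x :: rest) →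
      UW tail head H u v (l1 ++ x :: l3) := by
  intro l1
  induction l1 with
  | nil =>
    intro u h1
    obtain ⟨t, ht⟩ := h1.head_eq
    rw [List.nil_append] at ht
    obtain ⟨rfl, -⟩ := List.cons.inj ht.symm
    simpa using h2
  | cons a l1' ih =>
    intro u h1
    rw [List.cons_append] at h1
    generalize hL : l1' ++ x :: rest = L at h1
    cases h1 with
    | nil => simp at hL
    | cons _ e he hd hw =>
      subst hL
      rw [List.cons_append]
      exact UW.cons a e he hd (ih _ hw)

lemma not_nodup_split {α : Type*} {l : List α} (h : ¬ l.Nodup) :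
    ∃ (x : α) (l1 l2 l3 : List α), l = l1 ++ x :: l2 ++ x :: l3 := by
  induction l with
  | nil => simp at h
  | cons a t ih =>
    by_cases ha : a ∈ t
    · obtain ⟨l2, l3, ht⟩ := List.append_of_mem ha
      exact ⟨a, [], l2, l3, by simp [ht]⟩
    · have h' : ¬ t.Nodup := by
        intro hnd
        exact h (List.nodup_cons.mpr ⟨ha, hnd⟩)
      obtain ⟨x, l1, l2, l3, ht⟩ := ih h'
      exact ⟨x, a :: l1, l2, l3, by simp [ht]⟩

lemma UW.exists_nodup {H : Set E} :
    ∀ (n : ℕ) (vs : List V) {u v : V}, vs.length ≤ n → UW tail head H u v vs →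
      ∃ ws, UW tail head H u v ws ∧ ws.Nodup := by
  intro n
  induction n with
  | zero =>
    intro vs u v hlen h
    obtain ⟨t, rfl⟩ := h.head_eq
    simp at hlen
  | succ n ih =>
    intro vs u v hlen h
    by_cases hnd : vs.Nodup
    · exact ⟨vs, h, hnd⟩
    · obtain ⟨x, l1, l2, l3, rfl⟩ := not_nodup_split hnd
      have hsuf : (x :: l3) <:+ l1 ++ x :: l2 ++ x :: l3 :=
        ⟨l1 ++ x :: l2, by simp⟩
      have h2 := h.suffix hsuf
      have h1' : UW tail head H u v (l1 ++ x :: (l2 ++ x :: l3)) := by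
        simpa [List.append_assoc, List.cons_append] using h
      have h3 := UW.graft h2 l1 u h1'
      refine ih (l1 ++ x :: l3) ?_ h3
      simp only [List.length_append, List.length_cons] at hlen ⊢
      omega

lemma UReach.exists_uw {H : Set E} {u v : V} (h : UReach tail head H u v) :
    ∃ vs, UW tail head H u v vs := by
  induction h using Relation.ReflTransGen.head_induction_on with
  | refl => exact ⟨[v], UW.nil v⟩
  | head hab _ ih =>
    obtain ⟨vs, hvs⟩ := ih
    obtain ⟨e, he, hd⟩ := hab
    exact ⟨_, UW.cons _ e he hd hvs⟩

lemma inc_eq (hloops : NoLoops tail head) (i : V) (e : E) :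
    incMatrix tail head i e =
      (if tail e = i then (1:ℝ) else 0) - (if head e = i then 1 else 0) := by
  have hne : tail e ≠ head e := hloops e
  simp only [incMatrix, Matrix.of_apply]
  split_ifs with h1 h2 <;> first
    | (exact absurd (h1.trans h2.symm) hne)
    | ring

lemma mulVec_ind (e : E) (s : ℝ) :
    (incMatrix tail head).mulVec (fun f => if f = e then s else 0)
      = fun i => incMatrix tail head i e * s := by
  funext i
  simp only [Matrix.mulVec, dotProduct, mul_ite, mul_zero]
  rw [Finset.sum_ite_eq']
  simp

lemma sum_p_inc (hloops : NoLoops tail head) (p : V → ℝ) (e : E) :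
    ∑ i, p i * incMatrix tail head i e = p (tail e) - p (head e) := by
  have h : ∀ i, p i * incMatrix tail head i e
      = (if tail e = i then p i else 0) - (if head e = i then p i else 0) := by
    intro i
    rw [inc_eq hloops]
    split_ifs <;> ring
  rw [Finset.sum_congr rfl fun i _ => h i, Finset.sum_sub_distrib,
    Finset.sum_ite_eq, Finset.sum_ite_eq]
  simp

lemma cost_pot (hloops : NoLoops tail head) (ℓ : E → ℝ) (p : V → ℝ) (γ : E → ℝ)
    (hf : ∀ e, γ e ≠ 0 → p (tail e) - p (head e) = ℓ e) :
    ∑ e, γ e * ℓ e = ∑ i, p i * (incMatrix tail head).mulVec γ i := by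
  calc ∑ e, γ e * ℓ e = ∑ e, γ e * (p (tail e) - p (head e)) := by
        refine Finset.sum_congr rfl fun e _ => ?_
        by_cases h : γ e = 0
        · simp [h]
        · rw [hf e h]
    _ = ∑ e, (∑ i, p i * incMatrix tail head i e) * γ e := by
        refine Finset.sum_congr rfl fun e _ => ?_
        rw [sum_p_inc hloops]; ring
    _ = ∑ e, ∑ i, p i * incMatrix tail head i e * γ e := by
        simp [Finset.sum_mul]
    _ = ∑ i, ∑ e, p i * incMatrix tail head i e * γ e := Finset.sum_comm
    _ = ∑ i, p i * (incMatrix tail head).mulVec γ i := by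
        refine Finset.sum_congr rfl fun i _ => ?_
        simp [Matrix.mulVec, dotProduct, Finset.mul_sum, mul_assoc]

lemma exists_pathVec (hloops : NoLoops tail head) {H : Set E} {vs : List V} {u v : V}
    (hw : UW tail head H u v vs) :
    vs.Nodup →
    ∃ γ : E → ℝ, (∀ e, γ e = 0 ∨ γ e = 1 ∨ γ e = -1) ∧ (∀ e, γ e ≠ 0 → e ∈ H) ∧
      (∀ e, γ e ≠ 0 → tail e ∈ vs ∧ head e ∈ vs) ∧
      (incMatrix tail head).mulVec γ =
        fun i => (if u = i then (1:ℝ) else 0) - (if v = i then 1 else 0) := by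
  induction hw with
  | nil w =>
    intro _
    refine ⟨0, by simp, by simp, by simp, ?_⟩
    rw [Matrix.mulVec_zero]
    funext i
    simp
  | @cons w v vs' u e he hd hw ih =>
    intro hnd
    rw [List.nodup_cons] at hnd
    obtain ⟨hu, hnd'⟩ := hnd
    obtain ⟨γ', h01, hsupp, hep, hB⟩ := ih hnd'
    obtain ⟨t, rfl⟩ := hw.head_eq
    have hwmem : w ∈ w :: t := List.mem_cons_self
    have huw : u ≠ w := fun h => hu (h ▸ hwmem)
    have hγ'e : γ' e = 0 := by
      by_contra h
      obtain ⟨h1, h2⟩ := hep e h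
      rcases hd with ⟨hte, hhe⟩ | ⟨hte, hhe⟩
      · exact hu (hte ▸ h1)
      · exact hu (hhe ▸ h2)
    classical
    set s : ℝ := if tail e = u then 1 else -1 with hs
    refine ⟨fun f => γ' f + (if f = e then s else 0), ?_, ?_, ?_, ?_⟩
    · intro f
      by_cases hf : f = e
      · subst hf
        rw [hs]
        split_ifs <;> simp [hγ'e]
      · simpa [hf] using h01 f
    · intro f hf
      by_cases hfe : f = e
      · exact hfe ▸ he
      · simp only [hfe, if_false, add_zero] at hf
        exact hsupp f hf
    · intro f hf
      by_cases hfe : f = e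
      · subst hfe
        rcases hd with ⟨hte, hhe⟩ | ⟨hte, hhe⟩ <;>
          exact ⟨by simp [hte, hhe], by simp [hte, hhe]⟩
      · simp only [hfe, if_false, add_zero] at hf
        obtain ⟨h1, h2⟩ := hep f hf
        exact ⟨List.mem_cons_of_mem _ h1, List.mem_cons_of_mem _ h2⟩
    · have hfun : (fun f => γ' f + (if f = e then s else 0))
          = γ' + (fun f => if f = e then s else 0) := rfl
      rw [hfun, Matrix.mulVec_add, hB, mulVec_ind]
      funext i
      simp only [Pi.add_apply]
      rw [inc_eq hloops]
      rcases hd with ⟨hte, hhe⟩ | ⟨hte, hhe⟩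
      · have hs1 : s = 1 := if_pos hte
        rw [hte, hhe, hs1]
        split_ifs <;> ring
      · have hs1 : s = -1 := by
          rw [hs, if_neg]
          rw [hte]
          exact fun h => huw h.symm
        rw [hte, hhe, hs1]
        split_ifs <;> ring

lemma exists_potential (hloops : NoLoops tail head) (ℓ : E → ℝ) (F : Finset E) :
    (∀ γ : E → ℝ, (incMatrix tail head).mulVec γ = 0 →
      (∀ e, γ e = 0 ∨ γ e = 1 ∨ γ e = -1) →
      (∀ e, γ e ≠ 0 → e ∈ F) → ∑ e, γ e * ℓ e = 0) →
    ∃ p : V → ℝ, ∀ e ∈ F, p (tail e) - p (head e) = ℓ e := by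
  classical
  induction F using Finset.induction_on with
  | empty => exact fun _ => ⟨0, by simp⟩
  | @insert e0 F' h0 ih =>
    intro hzero
    have hzero' : ∀ γ : E → ℝ, (incMatrix tail head).mulVec γ = 0 →
        (∀ e, γ e = 0 ∨ γ e = 1 ∨ γ e = -1) →
        (∀ e, γ e ≠ 0 → e ∈ F') → ∑ e, γ e * ℓ e = 0 := fun γ h1 h2 h3 =>
      hzero γ h1 h2 fun e he => Finset.mem_insert_of_mem (h3 e he)
    obtain ⟨p', hp'⟩ := ih hzero'
    by_cases hre : UReach tail head (↑F' : Set E) (tail e0) (head e0)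
    · obtain ⟨vs0, hvs0⟩ := UReach.exists_uw hre
      obtain ⟨vs, hvs, hnd⟩ := UW.exists_nodup vs0.length vs0 le_rfl hvs0
      obtain ⟨γ, h01, hsupp, -, hB⟩ := exists_pathVec hloops hvs hnd
      have he0 : γ e0 = 0 := by
        by_contra h
        exact h0 (by simpa using hsupp e0 h)
      set γt : E → ℝ := fun f => γ f - (if f = e0 then 1 else 0) with hγt
      have hBt : (incMatrix tail head).mulVec γt = 0 := by
        have hfun : γt = γ - (fun f => if f = e0 then (1:ℝ) else 0) := rfl
        rw [hfun, Matrix.mulVec_sub, hB, mulVec_ind]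
        funext i
        simp only [Pi.sub_apply, Pi.zero_apply]
        rw [inc_eq hloops]
        ring
      have h01t : ∀ e, γt e = 0 ∨ γt e = 1 ∨ γt e = -1 := by
        intro f
        by_cases hf : f = e0
        · subst hf; simp [hγt, he0]
        · simpa [hγt, hf] using h01 f
      have hsuppt : ∀ e, γt e ≠ 0 → e ∈ insert e0 F' := by
        intro f hf
        by_cases hfe : f = e0
        · subst hfe; exact Finset.mem_insert_self _ _
        · simp only [hγt, hfe, if_false, sub_zero] at hf
          exact Finset.mem_insert_of_mem (by simpa using hsupp f hf)
      have hcost := hzero γt hBt h01t hsuppt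
      have hsplit : ∑ e, γt e * ℓ e = (∑ e, γ e * ℓ e) - ℓ e0 := by
        simp only [hγt, sub_mul, ite_mul, one_mul, zero_mul]
        rw [Finset.sum_sub_distrib, Finset.sum_ite_eq']
        simp
      have hγcost : ∑ e, γ e * ℓ e = p' (tail e0) - p' (head e0) := by
        rw [cost_pot hloops ℓ p' γ (fun e hee => hp' e (by simpa using hsupp e hee)), hB]
        simp only [mul_sub, mul_ite, mul_one, mul_zero]
        rw [Finset.sum_sub_distrib, Finset.sum_ite_eq, Finset.sum_ite_eq]
        simp
      refine ⟨p', ?_⟩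
      intro e hemem
      rcases Finset.mem_insert.mp hemem with rfl | hmem
      · linarith [hcost, hsplit, hγcost]
      · exact hp' e hmem
    · refine ⟨fun i => if UReach tail head (↑F' : Set E) (tail e0) i
          then p' i + (ℓ e0 - (p' (tail e0) - p' (head e0))) else p' i, ?_⟩
      intro e hemem
      beta_reduce
      rcases Finset.mem_insert.mp hemem with rfl | hmem
      · have hA : UReach tail head (↑F' : Set E) (tail e) (tail e) :=
          Relation.ReflTransGen.refl
        rw [if_pos hA, if_neg hre]
        ring
      · have hiff : UReach tail head (↑F' : Set E) (tail e0) (tail e) ↔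
            UReach tail head (↑F' : Set E) (tail e0) (head e) := by
          constructor
          · intro h
            exact h.tail ⟨e, by simpa using hmem, Or.inl ⟨rfl, rfl⟩⟩
          · intro h
            exact h.tail ⟨e, by simpa using hmem, Or.inr ⟨rfl, rfl⟩⟩
        by_cases ht : UReach tail head (↑F' : Set E) (tail e0) (tail e)
        · rw [if_pos ht, if_pos (hiff.mp ht)]
          have := hp' e hmem
          linarith
        · rw [if_neg ht, if_neg (fun h => ht (hiff.mpr h))]
          exact hp' e hmem

end AuxProofs


theorem statement_4 {V E : Type*} [Fintype V] [Fintype E] [DecidableEq V] [DecidableEq E]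
    (tail head : E → V)
    (hloops : NoLoops tail head) (hmult : NoMultiple tail head)
    (hconn : IsConnectedGraph tail head)
    (ℓ : E → ℝ) (hℓ : ∀ e, 0 < ℓ e)
    (b : V → ℝ) (hb : ∑ i, b i = 0)
    (H : Set E)
    (hzero : ∀ γ : E → ℝ, (incMatrix tail head).mulVec γ = 0 →
      (∀ e, γ e = 0 ∨ γ e = 1 ∨ γ e = -1) →
      (∀ e, γ e ≠ 0 → e ∈ H) → ∑ e, γ e * ℓ e = 0)
    (σ : E → ℝ) (hσflow : IsFlow tail head b σ) (hσpos : ∀ e, 0 ≤ σ e)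
    (hσsupp : ∀ e, σ e ≠ 0 → e ∈ H) :
    (∃ p : V → ℝ, ∀ e ∈ H, field tail head ℓ p e = 1) ∧
      ∀ p : V → ℝ, (∀ e ∈ H, field tail head ℓ p e = 1) →
        ∀ i ∈ VSet tail head H, (lap tail head ℓ σ).mulVec p i = b i := by
  classical
  have hFin : H.Finite := Set.toFinite H
  have hz : ∀ γ : E → ℝ, (incMatrix tail head).mulVec γ = 0 →
      (∀ e, γ e = 0 ∨ γ e = 1 ∨ γ e = -1) →
      (∀ e, γ e ≠ 0 → e ∈ hFin.toFinset) → ∑ e, γ e * ℓ e = 0 :=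
    fun γ h1 h2 h3 => hzero γ h1 h2 fun e he => hFin.mem_toFinset.mp (h3 e he)
  constructor
  · obtain ⟨p, hp⟩ := exists_potential hloops ℓ hFin.toFinset hz
    refine ⟨p, fun e he => ?_⟩
    have h1 := hp e (hFin.mem_toFinset.mpr he)
    show (p (tail e) - p (head e)) / ℓ e = 1
    rw [h1]
    exact div_self (hℓ e).ne'
  · intro p hp i _
    have hfield : ∀ e, σ e ≠ 0 → p (tail e) - p (head e) = ℓ e := by
      intro e he
      have h1 : (p (tail e) - p (head e)) / ℓ e = 1 := hp e (hσsupp e he)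
      rw [div_eq_one_iff_eq (hℓ e).ne'] at h1
      exact h1
    have key : (lap tail head ℓ σ).mulVec p = b := by
      rw [lap, ← Matrix.mulVec_mulVec, ← Matrix.mulVec_mulVec]
      have h1 : (incMatrix tail head).transpose.mulVec p
          = fun e => p (tail e) - p (head e) := by
        funext e
        have h2 : (incMatrix tail head).transpose.mulVec p e
            = ∑ i, p i * incMatrix tail head i e := by
          simp [Matrix.mulVec, dotProduct, Matrix.transpose_apply, mul_comm]
        rw [h2, sum_p_inc hloops]
      rw [h1]
      have h2 : (Matrix.diagonal fun e => σ e / ℓ e).mulVec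
          (fun e => p (tail e) - p (head e)) = σ := by
        funext e
        rw [Matrix.mulVec_diagonal]
        by_cases hσ : σ e = 0
        · simp [hσ]
        · rw [hfield e hσ, div_mul_cancel₀ _ (hℓ e).ne']
      rw [h2]
      exact hσflow
    exact congrFun key i
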